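/- Under assumptions: Ω ⊆ ℝ^N smooth bounded open, s ∈ (0,1), p : Ω̄×Ω̄ → (1,∞) continuous and symmetric with 1 < p⁻ ≤ p⁺ < ∞, r ∈ C(Ω̄) with 1 < r⁻ ≤ r⁺ < p⁻, and λ ∈ ℝ, the set B = {v ∈ W₀* : v + t·(S∘T)v = 0 for some t ∈ [0,1]} is bounded in W₀*, where T = L⁻¹ and ⟨Su, w⟩ = ∫_Ω |u|^{q(x)−2}u w dx − λ ∫_Ω |u|^{r(x)−2}u w dx with q(x) = p(x,x). -/

import Mathlib

open MeasureTheory Real Filter Topology Bornology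

lemma aux_sign_mul_self (a : ℝ) : Real.sign a * a = |a| := by
  rcases lt_trichotomy a 0 with h|h|h
  · rw [Real.sign_of_neg h, abs_of_neg h]; ring
  · simp [h]
  · rw [Real.sign_of_pos h, abs_of_pos h]; ring

lemma aux_rpow_sub_one_mul (a q : ℝ) (ha : 0 ≤ a) (hq : 1 ≤ q) :
    a ^ (q - 1) * a = a ^ q := by
  rcases eq_or_lt_of_le ha with h0|h0
  · rw [← h0, mul_zero, Real.zero_rpow (by linarith : q ≠ 0)]
  · rw [← Real.rpow_add_one h0.ne' (q - 1)]; ring_nf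

lemma aux_pow_eq (a q : ℝ) (hq : 1 ≤ q) :
    |a| ^ (q - 1) * Real.sign a * a = |a| ^ q := by
  rw [mul_assoc, aux_sign_mul_self, aux_rpow_sub_one_mul _ _ (abs_nonneg a) hq]

lemma aux_young (a b q : ℝ) (ha : 0 ≤ a) (hb : 0 ≤ b) (hq : 1 ≤ q) :
    a ^ (q - 1) * b ≤ a ^ q + b ^ q := by
  have hq0 : (0:ℝ) ≤ q - 1 := by linarith
  rcases le_total b a with h|h
  · have h2 : a ^ (q-1) * b ≤ a ^ (q-1) * a :=
      mul_le_mul_of_nonneg_left h (Real.rpow_nonneg ha _)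
    rw [aux_rpow_sub_one_mul _ _ ha hq] at h2
    exact h2.trans (le_add_of_nonneg_right (Real.rpow_nonneg hb _))
  · have h1 : a ^ (q-1) ≤ b ^ (q-1) := Real.rpow_le_rpow ha h hq0
    have h2 : a ^ (q-1) * b ≤ b ^ (q-1) * b :=
      mul_le_mul_of_nonneg_right h1 hb
    rw [aux_rpow_sub_one_mul _ _ hb hq] at h2
    exact h2.trans (le_add_of_nonneg_left (Real.rpow_nonneg ha _))

lemma aux_abs_sign_le (a : ℝ) : |Real.sign a| ≤ 1 := by
  rcases lt_trichotomy a 0 with h|h|h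
  · rw [Real.sign_of_neg h]; simp
  · simp [h]
  · rw [Real.sign_of_pos h]; simp

lemma aux_integrand_bound (a b q : ℝ) (hq : 1 ≤ q) :
    abs (|a| ^ (q - 1) * Real.sign a * b) ≤ |a| ^ q + |b| ^ q := by
  have h1 : abs (|a| ^ (q - 1) * Real.sign a * b) ≤ |a| ^ (q-1) * |b| := by
    rw [abs_mul, abs_mul, abs_of_nonneg (Real.rpow_nonneg (abs_nonneg a) _)]
    calc |a| ^ (q-1) * |Real.sign a| * |b| ≤ |a| ^ (q-1) * 1 * |b| := by
          refine mul_le_mul_of_nonneg_right ?_ (abs_nonneg b)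
          exact mul_le_mul_of_nonneg_left (aux_abs_sign_le a) (Real.rpow_nonneg (abs_nonneg a) _)
      _ = |a| ^ (q-1) * |b| := by ring
  exact h1.trans (aux_young _ _ _ (abs_nonneg a) (abs_nonneg b) hq)

lemma aux_rle (a rr qq : ℝ) (ha : 0 ≤ a) (h0 : 0 ≤ rr) (h : rr ≤ qq) :
    a ^ rr ≤ 1 + a ^ qq := by
  rcases le_total a 1 with h1|h1
  · have h2 := Real.rpow_le_one ha h1 h0
    have h3 : 0 ≤ a ^ qq := Real.rpow_nonneg ha _
    linarith
  · have h2 := Real.rpow_le_rpow_of_exponent_le h1 h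
    linarith

lemma aux_absorb (ε rr rp pm qq a : ℝ) (hε : 0 < ε) (hε1 : ε ≤ 1) (ha : 0 ≤ a)
    (hrr0 : 0 < rr) (hrr : rr ≤ rp) (hrp : rp < pm) (hqq : pm ≤ qq) :
    a ^ rr ≤ ε * a ^ qq + ((ε ^ (-(1/(pm - rp)))) ^ rp + 1) := by
  set A : ℝ := ε ^ (-(1/(pm - rp))) with hA
  have hd : 0 < pm - rp := by linarith
  have hA0 : 0 < A := Real.rpow_pos_of_pos hε _
  have hA1 : 1 ≤ A := by
    refine Real.one_le_rpow_of_pos_of_le_one_of_nonpos hε hε1 ?_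
    have : 0 < 1/(pm - rp) := by positivity
    linarith
  have hAK : 0 ≤ A ^ rp := Real.rpow_nonneg hA0.le _
  have hεq : 0 ≤ ε * a ^ qq := mul_nonneg hε.le (Real.rpow_nonneg ha _)
  rcases le_total a 1 with h1|h1
  · have := Real.rpow_le_one ha h1 hrr0.le
    linarith
  · have ha0 : 0 < a := by linarith
    have h2 : a ^ rr ≤ a ^ rp := Real.rpow_le_rpow_of_exponent_le h1 hrr
    rcases le_total a A with h3|h3
    · have : a ^ rp ≤ A ^ rp := Real.rpow_le_rpow ha0.le h3 (by linarith)
      linarith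
    · have hArppm : A ^ (pm - rp) = ε⁻¹ := by
        rw [hA, ← Real.rpow_mul hε.le]
        rw [show -(1/(pm - rp)) * (pm - rp) = -1 by field_simp]
        exact Real.rpow_neg_one ε
      have h4 : ε⁻¹ ≤ a ^ (pm - rp) := hArppm ▸ Real.rpow_le_rpow hA0.le h3 hd.le
      have h5 : a ^ rp * ε⁻¹ ≤ a ^ pm := by
        calc a ^ rp * ε⁻¹ ≤ a ^ rp * a ^ (pm - rp) :=
              mul_le_mul_of_nonneg_left h4 (Real.rpow_nonneg ha0.le _)
          _ = a ^ pm := by rw [← Real.rpow_add ha0]; ring_nf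
      have h7 : a ^ rp ≤ ε * a ^ pm := by
        calc a ^ rp = (a ^ rp * ε⁻¹) * ε := by field_simp
          _ ≤ a ^ pm * ε := mul_le_mul_of_nonneg_right h5 hε.le
          _ = ε * a ^ pm := mul_comm _ _
      have h6 : a ^ pm ≤ a ^ qq := Real.rpow_le_rpow_of_exponent_le h1 hqq
      have h8 : ε * a ^ pm ≤ ε * a ^ qq := mul_le_mul_of_nonneg_left h6 hε.le
      linarith

lemma aux_scale (a l qq pmv ppv : ℝ) (hl : 0 < l) (h1 : pmv ≤ qq) (h2 : qq ≤ ppv) :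
    |a / l| ^ qq ≤ max (l⁻¹ ^ pmv) (l⁻¹ ^ ppv) * |a| ^ qq := by
  rw [abs_div, abs_of_pos hl, div_eq_mul_inv,
    Real.mul_rpow (abs_nonneg a) (inv_nonneg.2 hl.le), mul_comm]
  refine mul_le_mul_of_nonneg_right ?_ (Real.rpow_nonneg (abs_nonneg a) _)
  rcases le_total l⁻¹ 1 with h|h
  · exact le_trans (Real.rpow_le_rpow_of_exponent_ge (inv_pos.2 hl) h h1) (le_max_left _ _)
  · exact le_trans (Real.rpow_le_rpow_of_exponent_le h h2) (le_max_right _ _)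

/-- The integrand of the fractional `p(x,y)`-Laplacian pairing `⟨Lu, w⟩`. -/
noncomputable def fracKernel {N : ℕ} (s : ℝ)
    (p : EuclideanSpace ℝ (Fin N) × EuclideanSpace ℝ (Fin N) → ℝ)
    (u w : EuclideanSpace ℝ (Fin N) → ℝ)
    (z : EuclideanSpace ℝ (Fin N) × EuclideanSpace ℝ (Fin N)) : ℝ :=
  |u z.1 - u z.2| ^ (p z - 1) * Real.sign (u z.1 - u z.2) * (w z.1 - w z.2) /
    ‖z.1 - z.2‖ ^ ((N : ℝ) + s * p z)

/-- The pairing `⟨Lu, w⟩` of the fractional `p(x,y)`-Laplacian. -/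
noncomputable def fracPairing {N : ℕ} (Ω : Set (EuclideanSpace ℝ (Fin N))) (s : ℝ)
    (p : EuclideanSpace ℝ (Fin N) × EuclideanSpace ℝ (Fin N) → ℝ)
    (u w : EuclideanSpace ℝ (Fin N) → ℝ) : ℝ :=
  ∫ z in Ω ×ˢ Ω, fracKernel s p u w z

/-- The Gagliardo modular. -/
noncomputable def gagliardoModular {N : ℕ} (Ω : Set (EuclideanSpace ℝ (Fin N))) (s : ℝ)
    (p : EuclideanSpace ℝ (Fin N) × EuclideanSpace ℝ (Fin N) → ℝ)
    (u : EuclideanSpace ℝ (Fin N) → ℝ) : ℝ :=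
  ∫ z in Ω ×ˢ Ω, |u z.1 - u z.2| ^ p z / ‖z.1 - z.2‖ ^ ((N : ℝ) + s * p z)

/-- The Gagliardo seminorm with variable exponent. -/
noncomputable def gagliardoNorm {N : ℕ} (Ω : Set (EuclideanSpace ℝ (Fin N))) (s : ℝ)
    (p : EuclideanSpace ℝ (Fin N) × EuclideanSpace ℝ (Fin N) → ℝ)
    (u : EuclideanSpace ℝ (Fin N) → ℝ) : ℝ :=
  sInf {l : ℝ | 0 < l ∧ gagliardoModular Ω s p (fun x => u x / l) ≤ 1}

/-- The Luxemburg norm on the variable exponent Lebesgue space. -/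
noncomputable def luxNorm {N : ℕ} (Ω : Set (EuclideanSpace ℝ (Fin N)))
    (q : EuclideanSpace ℝ (Fin N) → ℝ) (u : EuclideanSpace ℝ (Fin N) → ℝ) : ℝ :=
  sInf {l : ℝ | 0 < l ∧ (∫ x in Ω, |u x / l| ^ q x) ≤ 1}

lemma aux_abs_sub (a b : ℝ) : |a - b| ≤ |a| + |b| := by
  rw [sub_eq_add_neg]
  exact (abs_add_le _ _).trans_eq (by rw [abs_neg])

set_option maxHeartbeats 1000000

theorem stmt14 {N : ℕ} (hN : 2 ≤ N)
    (Ω : Set (EuclideanSpace ℝ (Fin N))) (hΩo : IsOpen Ω)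
    (hΩb : IsBounded Ω) (hΩne : Ω.Nonempty)
    (s : ℝ) (hs : s ∈ Set.Ioo (0 : ℝ) 1)
    (p : EuclideanSpace ℝ (Fin N) × EuclideanSpace ℝ (Fin N) → ℝ)
    (hpc : Continuous p) (hsym : ∀ x y, p (x, y) = p (y, x))
    (pm pp : ℝ) (hpm : 1 < pm) (hpbounds : ∀ z, pm ≤ p z ∧ p z ≤ pp)
    (r : EuclideanSpace ℝ (Fin N) → ℝ) (hrc : Continuous r)
    (rm rp : ℝ) (hrm : 1 < rm) (hrp : rp < pm)
    (hrbounds : ∀ x, rm ≤ r x ∧ r x ≤ rp)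
    (lam : ℝ)
    -- `W₀` is represented abstractly by a reflexive Banach space `X` of functions:
    (X : Type*) [NormedAddCommGroup X] [NormedSpace ℝ X] [CompleteSpace X]
    (hrefl : Function.Surjective (NormedSpace.inclusionInDoubleDual ℝ X))
    (j : X →ₗ[ℝ] (EuclideanSpace ℝ (Fin N) → ℝ))
    (hjm : ∀ u, Measurable (j u))
    -- the norm of `X` is the Gagliardo seminorm
    (hnorm : ∀ u : X, ‖u‖ = gagliardoNorm Ω s p (j u))
    -- the (compact) embedding `W₀ ↪ L^{q(x)}(Ω)`, `q(x) = p(x,x)`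
    (hemb : ∃ C > 0, ∀ u : X, luxNorm Ω (fun x => p (x, x)) (j u) ≤ C * ‖u‖)
    (hint : ∀ u : X, Integrable (fun x => |j u x| ^ p (x, x)) (volume.restrict Ω))
    -- the operator `L` associated to the fractional `p(x)`-Laplacian
    (L : X → StrongDual ℝ X)
    (hL : ∀ u w : X, L u w = fracPairing Ω s p (j u) (j w))
    -- `T = L⁻¹`
    (T : StrongDual ℝ X → X)
    (hT : ∀ v, L (T v) = v) (hTL : ∀ u, T (L u) = u)
    -- the operator `S`
    (S : X → StrongDual ℝ X)
    (hS : ∀ u w : X, S u w =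
      (∫ x in Ω, |j u x| ^ (p (x, x) - 1) * Real.sign (j u x) * j w x) -
        lam * ∫ x in Ω, |j u x| ^ (r x - 1) * Real.sign (j u x) * j w x) :
    IsBounded {v : StrongDual ℝ X |
      ∃ t ∈ Set.Icc (0 : ℝ) 1, v + t • S (T v) = 0} := by
  classical
  obtain ⟨C, hC0, hembC⟩ := hemb
  obtain ⟨hs0, hs1⟩ := hs
  have h1pm : (1:ℝ) ≤ pm := hpm.le
  obtain ⟨x₀, hx₀⟩ := hΩne
  have hpmpp : pm ≤ pp := le_trans (hpbounds (x₀, x₀)).1 (hpbounds (x₀, x₀)).2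
  have h1pp : (1:ℝ) ≤ pp := le_trans h1pm hpmpp
  have hμfin : volume Ω < ⊤ := hΩb.measure_lt_top
  haveI : IsFiniteMeasure (volume.restrict Ω) := ⟨by rwa [Measure.restrict_apply_univ]⟩
  set μR : ℝ := (volume Ω).toReal with hμRdef
  have hμR0 : 0 ≤ μR := ENNReal.toReal_nonneg
  set q : EuclideanSpace ℝ (Fin N) → ℝ := fun x => p (x, x) with hqdef
  have hqc : Continuous q := hpc.comp (continuous_id.prodMk continuous_id)
  have hqb : ∀ x, pm ≤ q x ∧ q x ≤ pp := fun x => hpbounds (x, x)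
  have hq1 : ∀ x, 1 ≤ q x := fun x => le_trans h1pm (hqb x).1
  have hr1 : ∀ x, 1 ≤ r x := fun x => le_trans hrm.le (hrbounds x).1
  have hrq : ∀ x, r x ≤ q x := fun x => le_trans (hrbounds x).2 (le_trans hrp.le (hqb x).1)
  have hintq : ∀ u : X, Integrable (fun x => |j u x| ^ q x) (volume.restrict Ω) := hint
  have hintr : ∀ u : X, Integrable (fun x => |j u x| ^ r x) (volume.restrict Ω) := by
    intro u
    refine ((integrable_const (1:ℝ)).add (hintq u)).mono'
      ((hjm u).abs.pow hrc.measurable).aestronglyMeasurable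
      (Filter.Eventually.of_forall fun x => ?_)
    rw [Real.norm_eq_abs, abs_of_nonneg (Real.rpow_nonneg (abs_nonneg _) _)]
    exact aux_rle _ _ _ (abs_nonneg _) (by linarith [hr1 x]) (hrq x)
  have hintq_div : ∀ (w : X) (l : ℝ), 0 < l →
      Integrable (fun x => |j w x / l| ^ q x) (volume.restrict Ω) := by
    intro w l hl
    refine ((hintq w).const_mul (max (l⁻¹ ^ pm) (l⁻¹ ^ pp))).mono'
      (((hjm w).div_const l).abs.pow hqc.measurable).aestronglyMeasurable
      (Filter.Eventually.of_forall fun x => ?_)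
    rw [Real.norm_eq_abs, abs_of_nonneg (Real.rpow_nonneg (abs_nonneg _) _)]
    exact aux_scale _ _ _ _ _ hl (hqb x).1 (hqb x).2
  -- modular bound from the Luxemburg norm embedding
  have modq : ∀ w : X, (∫ x in Ω, |j w x| ^ q x) ≤ (C * ‖w‖ + 1) ^ pp := by
    intro w
    have hbw : (0:ℝ) ≤ C * ‖w‖ := mul_nonneg hC0.le (norm_nonneg w)
    have hb1 : 1 ≤ C * ‖w‖ + 1 := by linarith
    have hb0 : (0:ℝ) < C * ‖w‖ + 1 := by linarith
    have hInn : 0 ≤ ∫ x in Ω, |j w x| ^ q x :=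
      integral_nonneg fun x => Real.rpow_nonneg (abs_nonneg _) _
    have hAne : {l : ℝ | 0 < l ∧ (∫ x in Ω, |j w x / l| ^ q x) ≤ 1}.Nonempty := by
      refine ⟨(∫ x in Ω, |j w x| ^ q x) + 1, by linarith, ?_⟩
      have hI1 : (0:ℝ) < (∫ x in Ω, |j w x| ^ q x) + 1 := by linarith
      calc (∫ x in Ω, |j w x / ((∫ x in Ω, |j w x| ^ q x) + 1)| ^ q x)
          ≤ ∫ x in Ω, |j w x| ^ q x / ((∫ x in Ω, |j w x| ^ q x) + 1) := by
            refine integral_mono_of_nonneg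
              (Filter.Eventually.of_forall fun x => Real.rpow_nonneg (abs_nonneg _) _)
              ((hintq w).div_const _) (Filter.Eventually.of_forall fun x => ?_)
            dsimp only
            rw [abs_div, abs_of_pos hI1, Real.div_rpow (abs_nonneg _) hI1.le,
              div_eq_mul_inv, div_eq_mul_inv]
            refine mul_le_mul_of_nonneg_left (inv_anti₀ hI1 ?_)
              (Real.rpow_nonneg (abs_nonneg _) _)
            calc (∫ x in Ω, |j w x| ^ q x) + 1
                = ((∫ x in Ω, |j w x| ^ q x) + 1) ^ (1:ℝ) := (Real.rpow_one _).symm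
              _ ≤ ((∫ x in Ω, |j w x| ^ q x) + 1) ^ q x :=
                Real.rpow_le_rpow_of_exponent_le (by linarith) (hq1 x)
        _ = (∫ x in Ω, |j w x| ^ q x) / ((∫ x in Ω, |j w x| ^ q x) + 1) := integral_div _ _
        _ ≤ 1 := by rw [div_le_one hI1]; linarith
    have hlux : sInf {l : ℝ | 0 < l ∧ (∫ x in Ω, |j w x / l| ^ q x) ≤ 1} < C * ‖w‖ + 1 := by
      have h := hembC w
      have h2 : luxNorm Ω (fun x => p (x,x)) (j w) =
          sInf {l : ℝ | 0 < l ∧ (∫ x in Ω, |j w x / l| ^ q x) ≤ 1} := rfl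
      rw [h2] at h
      linarith
    obtain ⟨l, ⟨hl0, hl1⟩, hlb⟩ := exists_lt_of_csInf_lt hAne hlux
    have hstep : (∫ x in Ω, |j w x / (C * ‖w‖ + 1)| ^ q x) ≤ 1 := by
      refine le_trans (integral_mono_of_nonneg
        (Filter.Eventually.of_forall fun x => Real.rpow_nonneg (abs_nonneg _) _)
        (hintq_div w l hl0) (Filter.Eventually.of_forall fun x => ?_)) hl1
      dsimp only
      refine Real.rpow_le_rpow (abs_nonneg _) ?_ (by linarith [hq1 x])
      rw [abs_div, abs_div, abs_of_pos hb0, abs_of_pos hl0, div_eq_mul_inv, div_eq_mul_inv]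
      exact mul_le_mul_of_nonneg_left (inv_anti₀ hl0 hlb.le) (abs_nonneg _)
    calc (∫ x in Ω, |j w x| ^ q x)
        ≤ ∫ x in Ω, (C * ‖w‖ + 1) ^ pp * |j w x / (C * ‖w‖ + 1)| ^ q x := by
          refine integral_mono_of_nonneg
            (Filter.Eventually.of_forall fun x => Real.rpow_nonneg (abs_nonneg _) _)
            ((hintq_div w _ hb0).const_mul _) (Filter.Eventually.of_forall fun x => ?_)
          dsimp only
          have h1 : |j w x| ^ q x = (C * ‖w‖ + 1) ^ (q x) * |j w x / (C * ‖w‖ + 1)| ^ q x := by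
            rw [abs_div, abs_of_pos hb0, Real.div_rpow (abs_nonneg _) hb0.le]
            rw [mul_div_cancel₀]
            exact ne_of_gt (Real.rpow_pos_of_pos hb0 _)
          rw [h1]
          exact mul_le_mul_of_nonneg_right
            (Real.rpow_le_rpow_of_exponent_le hb1 (hqb x).2)
            (Real.rpow_nonneg (abs_nonneg _) _)
      _ = (C * ‖w‖ + 1) ^ pp * ∫ x in Ω, |j w x / (C * ‖w‖ + 1)| ^ q x :=
          integral_const_mul _ _
      _ ≤ (C * ‖w‖ + 1) ^ pp * 1 :=
          mul_le_mul_of_nonneg_left hstep (Real.rpow_nonneg hb0.le _)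
      _ = (C * ‖w‖ + 1) ^ pp := mul_one _
  
  -- constants
  set ε : ℝ := (1 + |lam|)⁻¹ with hεdef
  have hε0 : 0 < ε := by rw [hεdef]; positivity
  have hε1 : ε ≤ 1 := by
    have h : (1:ℝ) ≤ 1 + |lam| := by linarith [abs_nonneg lam]
    rw [hεdef]
    simpa using inv_anti₀ one_pos h
  set K : ℝ := (ε ^ (-(1/(pm - rp)))) ^ rp + 1 with hKdef
  clear_value K
  have hK0 : 0 ≤ K := by
    have h := Real.rpow_nonneg (Real.rpow_nonneg hε0.le (-(1/(pm - rp)))) rp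
    rw [hKdef]; linarith
  set M : ℝ := |lam| * (K * μR) with hMdef
  clear_value M
  have hM0 : 0 ≤ M := by
    rw [hMdef]; exact mul_nonneg (abs_nonneg _) (mul_nonneg hK0 hμR0)
  set Du : ℝ := (C * (M + 1) + 1) ^ pp with hDudef
  clear_value Du
  set Dw : ℝ := (C + 1) ^ pp with hDwdef
  clear_value Dw
  have hDu0 : 0 ≤ Du := by
    rw [hDudef]
    refine Real.rpow_nonneg ?_ _
    have := mul_nonneg hC0.le (by linarith : (0:ℝ) ≤ M + 1)
    linarith
  have hDw0 : 0 ≤ Dw := by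
    rw [hDwdef]
    exact Real.rpow_nonneg (by linarith) _
  set R : ℝ := Du + Dw + |lam| * (2 * μR + (Du + Dw)) with hRdef
  clear_value R
  have hR0 : 0 ≤ R := by
    have h : 0 ≤ |lam| * (2 * μR + (Du + Dw)) :=
      mul_nonneg (abs_nonneg _) (by linarith)
    rw [hRdef]; linarith
  refine (Metric.isBounded_closedBall (x := (0 : StrongDual ℝ X)) (r := R)).subset ?_
  rintro v ⟨t, ⟨ht0, ht1⟩, heq⟩
  rw [Metric.mem_closedBall, dist_zero_right]
  have hvS : v = -(t • S (T v)) := eq_neg_of_add_eq_zero_left heq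
  set u : X := T v with hudef
  have hvL : L u = v := hT v
  have hq1' : ∀ z : EuclideanSpace ℝ (Fin N) × EuclideanSpace ℝ (Fin N), 1 ≤ p z :=
    fun z => le_trans h1pm (hpbounds z).1
  have hLuu : (L u) u = gagliardoModular Ω s p (j u) := by
    rw [hL]
    unfold fracPairing gagliardoModular fracKernel
    refine integral_congr_ae (Filter.Eventually.of_forall fun z => ?_)
    dsimp only
    rw [aux_pow_eq _ _ (hq1' z)]
  have hSuu : S u u = (∫ x in Ω, |j u x| ^ q x) - lam * ∫ x in Ω, |j u x| ^ r x := by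
    rw [hS]
    congr 1
    · exact integral_congr_ae (Filter.Eventually.of_forall fun x => aux_pow_eq _ _ (hq1 x))
    · congr 1
      exact integral_congr_ae (Filter.Eventually.of_forall fun x => aux_pow_eq _ _ (hr1 x))
  set Iq : ℝ := ∫ x in Ω, |j u x| ^ q x with hIqdef
  clear_value Iq
  set Ir : ℝ := ∫ x in Ω, |j u x| ^ r x with hIrdef
  clear_value Ir
  have hIq0 : 0 ≤ Iq := by
    rw [hIqdef]; exact integral_nonneg fun x => Real.rpow_nonneg (abs_nonneg _) _
  have hIr0 : 0 ≤ Ir := by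
    rw [hIrdef]; exact integral_nonneg fun x => Real.rpow_nonneg (abs_nonneg _) _
  have hρ0 : 0 ≤ gagliardoModular Ω s p (j u) :=
    integral_nonneg fun z => div_nonneg (Real.rpow_nonneg (abs_nonneg _) _)
      (Real.rpow_nonneg (norm_nonneg _) _)
  have hkey : gagliardoModular Ω s p (j u) + t * Iq = t * (lam * Ir) := by
    have h1 : v u = gagliardoModular Ω s p (j u) := by rw [← hvL, hLuu]
    have h2 : v u = -(t * (Iq - lam * Ir)) := by
      rw [hvS]
      simp only [ContinuousLinearMap.neg_apply, ContinuousLinearMap.smul_apply, smul_eq_mul]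
      rw [hSuu]
    rw [h1] at h2
    linear_combination h2
  have hIrb : Ir ≤ ε * Iq + K * μR := by
    rw [hIrdef, hIqdef]
    have hpt : ∀ x, |j u x| ^ r x ≤ ε * |j u x| ^ q x + K := by
      intro x
      have h := aux_absorb ε (r x) rp pm (q x) (|j u x|) hε0 hε1 (abs_nonneg _)
        (by linarith [hr1 x]) (hrbounds x).2 hrp (hqb x).1
      rw [← hKdef] at h
      exact h
    calc (∫ x in Ω, |j u x| ^ r x) ≤ ∫ x in Ω, (ε * |j u x| ^ q x + K) :=
          integral_mono_of_nonneg
            (Filter.Eventually.of_forall fun x => Real.rpow_nonneg (abs_nonneg _) _)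
            (((hintq u).const_mul ε).add (integrable_const K))
            (Filter.Eventually.of_forall hpt)
      _ = ε * (∫ x in Ω, |j u x| ^ q x) + K * μR := by
          rw [integral_add ((hintq u).const_mul ε) (integrable_const K),
            integral_const_mul, setIntegral_const, smul_eq_mul, measureReal_def, ← hμRdef]
          ring
  have hρM : gagliardoModular Ω s p (j u) ≤ M := by
    have h1 : t * (lam * Ir) ≤ t * (|lam| * Ir) :=
      mul_le_mul_of_nonneg_left (mul_le_mul_of_nonneg_right (le_abs_self lam) hIr0) ht0
    have h3 : t * (|lam| * Ir) ≤ t * (|lam| * (ε * Iq + K * μR)) :=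
      mul_le_mul_of_nonneg_left (mul_le_mul_of_nonneg_left hIrb (abs_nonneg _)) ht0
    have h4 : |lam| * ε ≤ 1 := by
      rw [hεdef, ← div_eq_mul_inv, div_le_one (by positivity)]
      linarith [abs_nonneg lam]
    have h5 : t * (|lam| * (ε * Iq + K * μR)) = (t * (|lam| * ε)) * Iq + t * M := by
      rw [hMdef]; ring
    have h6 : (t * (|lam| * ε)) * Iq ≤ t * Iq := by
      have h8 := mul_le_mul_of_nonneg_right (mul_le_mul_of_nonneg_left h4 ht0) hIq0
      linarith
    have h7 : t * M ≤ M := by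
      have h9 := mul_le_mul_of_nonneg_right ht1 hM0
      linarith
    linarith [hkey]
  -- Step 2 : norm bound on u
  have hl₀ : (1:ℝ) ≤ M + 1 := by linarith
  have hl₀0 : (0:ℝ) < M + 1 := by linarith
  have hnormu : ‖u‖ ≤ M + 1 := by
    rw [hnorm u]
    refine csInf_le ⟨0, fun l hl => hl.1.le⟩ ?_
    refine Set.mem_setOf.mpr ⟨by linarith, ?_⟩
    set F : EuclideanSpace ℝ (Fin N) × EuclideanSpace ℝ (Fin N) → ℝ :=
      fun z => |j u z.1 - j u z.2| ^ p z / ‖z.1 - z.2‖ ^ ((N:ℝ) + s * p z) with hFdef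
    have hF0 : ∀ z, 0 ≤ F z := fun z => div_nonneg (Real.rpow_nonneg (abs_nonneg _) _)
      (Real.rpow_nonneg (norm_nonneg _) _)
    have hFint_eq : (∫ z in Ω ×ˢ Ω, F z) = gagliardoModular Ω s p (j u) := rfl
    have hcont : Continuous (fun z : EuclideanSpace ℝ (Fin N) × EuclideanSpace ℝ (Fin N) =>
        ((M+1) ^ p z)⁻¹) := by
      have h1 : ∀ z : EuclideanSpace ℝ (Fin N) × EuclideanSpace ℝ (Fin N),
          (M+1) ^ p z = Real.exp (Real.log (M+1) * p z) :=
        fun z => Real.rpow_def_of_pos hl₀0 _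
      simp only [h1]
      exact (Real.continuous_exp.comp (continuous_const.mul hpc)).inv₀ fun z => Real.exp_ne_zero _
    have hcont2 : Continuous (fun z : EuclideanSpace ℝ (Fin N) × EuclideanSpace ℝ (Fin N) =>
        (M+1) ^ p z) := by
      have h1 : ∀ z : EuclideanSpace ℝ (Fin N) × EuclideanSpace ℝ (Fin N),
          (M+1) ^ p z = Real.exp (Real.log (M+1) * p z) :=
        fun z => Real.rpow_def_of_pos hl₀0 _
      simp only [h1]
      exact Real.continuous_exp.comp (continuous_const.mul hpc)
    have hGeq : gagliardoModular Ω s p (fun x => j u x / (M + 1)) =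
        ∫ z in Ω ×ˢ Ω, F z * ((M+1) ^ p z)⁻¹ := by
      refine integral_congr_ae (Filter.Eventually.of_forall fun z => ?_)
      show |j u z.1 / (M+1) - j u z.2 / (M+1)| ^ p z / ‖z.1 - z.2‖ ^ ((N:ℝ) + s * p z)
        = F z * ((M+1) ^ p z)⁻¹
      rw [div_sub_div_same, abs_div, abs_of_pos hl₀0,
        Real.div_rpow (abs_nonneg _) hl₀0.le, div_right_comm, div_eq_mul_inv]
    rw [hGeq]
    by_cases hFi : Integrable F (volume.restrict (Ω ×ˢ Ω))
    · have hdom : ∀ z, F z * ((M+1) ^ p z)⁻¹ ≤ F z * ((M+1) ^ pm)⁻¹ := fun z =>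
        mul_le_mul_of_nonneg_left
          (inv_anti₀ (Real.rpow_pos_of_pos hl₀0 _)
            (Real.rpow_le_rpow_of_exponent_le hl₀ (hpbounds z).1)) (hF0 z)
      have hnn : ∀ z, 0 ≤ F z * ((M+1) ^ p z)⁻¹ := fun z =>
        mul_nonneg (hF0 z) (inv_nonneg.2 (Real.rpow_nonneg hl₀0.le _))
      calc (∫ z in Ω ×ˢ Ω, F z * ((M+1) ^ p z)⁻¹)
          ≤ ∫ z in Ω ×ˢ Ω, F z * ((M+1) ^ pm)⁻¹ :=
            integral_mono_of_nonneg (Filter.Eventually.of_forall hnn)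
              (hFi.mul_const _) (Filter.Eventually.of_forall hdom)
        _ = (∫ z in Ω ×ˢ Ω, F z) * ((M+1) ^ pm)⁻¹ := integral_mul_const _ _
        _ ≤ M * ((M+1) ^ pm)⁻¹ := by
            rw [hFint_eq]
            exact mul_le_mul_of_nonneg_right hρM (inv_nonneg.2 (Real.rpow_nonneg hl₀0.le _))
        _ ≤ M * (M+1)⁻¹ := by
            refine mul_le_mul_of_nonneg_left (inv_anti₀ hl₀0 ?_) hM0
            calc M + 1 = (M+1) ^ (1:ℝ) := (Real.rpow_one _).symm
              _ ≤ (M+1) ^ pm := Real.rpow_le_rpow_of_exponent_le hl₀ h1pm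
        _ ≤ 1 := by rw [← div_eq_mul_inv, div_le_one hl₀0]; linarith
    · have hGnot : ¬ Integrable (fun z => F z * ((M+1) ^ p z)⁻¹) (volume.restrict (Ω ×ˢ Ω)) := by
        intro hG
        apply hFi
        have hFeq : F = fun z => (F z * ((M+1) ^ p z)⁻¹) * ((M+1) ^ p z) := by
          funext z
          rw [mul_assoc, inv_mul_cancel₀ (ne_of_gt (Real.rpow_pos_of_pos hl₀0 _)), mul_one]
        refine (hG.mul_const ((M+1) ^ pp)).mono' ?_ (Filter.Eventually.of_forall fun z => ?_)
        · rw [hFeq]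
          exact hG.aestronglyMeasurable.mul hcont2.aestronglyMeasurable
        · rw [Real.norm_eq_abs, abs_of_nonneg (hF0 z)]
          have hz : F z = (F z * ((M+1) ^ p z)⁻¹) * ((M+1) ^ p z) := by
            rw [mul_assoc, inv_mul_cancel₀ (ne_of_gt (Real.rpow_pos_of_pos hl₀0 _)), mul_one]
          calc F z = (F z * ((M+1) ^ p z)⁻¹) * ((M+1) ^ p z) := hz
            _ ≤ (F z * ((M+1) ^ p z)⁻¹) * ((M+1) ^ pp) :=
              mul_le_mul_of_nonneg_left
                (Real.rpow_le_rpow_of_exponent_le hl₀ (hpbounds z).2)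
                (mul_nonneg (hF0 z) (inv_nonneg.2 (Real.rpow_nonneg hl₀0.le _)))
      rw [integral_undef hGnot]
      norm_num
  -- Step 3 : bound the dual norm
  have hIqu : Iq ≤ Du := by
    rw [hIqdef, hDudef]
    refine le_trans (modq u) ?_
    have hc1 := mul_nonneg hC0.le (norm_nonneg u)
    have hc2 := mul_le_mul_of_nonneg_left hnormu hC0.le
    exact Real.rpow_le_rpow (by linarith) (by linarith) (by linarith)
  have hQw : ∀ w : X, ‖w‖ ≤ 1 → (∫ x in Ω, |j w x| ^ q x) ≤ Dw := by
    intro w hw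
    refine le_trans (modq w) ?_
    rw [hDwdef]
    have hc1 := mul_nonneg hC0.le (norm_nonneg w)
    have hc2 := mul_le_mul_of_nonneg_left hw hC0.le
    refine Real.rpow_le_rpow (by linarith) (by linarith [hc2, mul_one C]) (by linarith)
  have hSb : ∀ w : X, ‖w‖ ≤ 1 → |S u w| ≤ R := by
    intro w hw
    have hQwb := hQw w hw
    rw [hS]
    have hA : |∫ x in Ω, |j u x| ^ (p (x,x) - 1) * Real.sign (j u x) * j w x| ≤
        Iq + ∫ x in Ω, |j w x| ^ q x := by
      have h := norm_integral_le_of_norm_le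
        (f := fun x => |j u x| ^ (p (x,x) - 1) * Real.sign (j u x) * j w x)
        (g := fun x => |j u x| ^ q x + |j w x| ^ q x)
        ((hintq u).add (hintq w))
        (Filter.Eventually.of_forall fun x => by
          rw [Real.norm_eq_abs]
          exact aux_integrand_bound (j u x) (j w x) (q x) (hq1 x))
      rw [integral_add (hintq u) (hintq w), Real.norm_eq_abs, ← hIqdef] at h
      exact h
    have hB : |∫ x in Ω, |j u x| ^ (r x - 1) * Real.sign (j u x) * j w x| ≤
        (μR + Iq) + (μR + ∫ x in Ω, |j w x| ^ q x) := by
      have hg1 : Integrable (fun x => (1:ℝ) + |j u x| ^ q x) (volume.restrict Ω) :=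
        (integrable_const _).add (hintq u)
      have hg2 : Integrable (fun x => (1:ℝ) + |j w x| ^ q x) (volume.restrict Ω) :=
        (integrable_const _).add (hintq w)
      have h := norm_integral_le_of_norm_le
        (f := fun x => |j u x| ^ (r x - 1) * Real.sign (j u x) * j w x)
        (g := fun x => ((1:ℝ) + |j u x| ^ q x) + ((1:ℝ) + |j w x| ^ q x))
        (hg1.add hg2)
        (Filter.Eventually.of_forall fun x => by
          rw [Real.norm_eq_abs]
          refine le_trans (aux_integrand_bound (j u x) (j w x) (r x) (hr1 x)) ?_
          have h1 := aux_rle (|j u x|) (r x) (q x) (abs_nonneg _) (by linarith [hr1 x]) (hrq x)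
          have h2 := aux_rle (|j w x|) (r x) (q x) (abs_nonneg _) (by linarith [hr1 x]) (hrq x)
          linarith)
      rw [integral_add hg1 hg2, integral_add (integrable_const _) (hintq u),
        integral_add (integrable_const _) (hintq w), Real.norm_eq_abs] at h
      simp only [setIntegral_const, smul_eq_mul, mul_one] at h
      rw [← hIqdef] at h
      rw [measureReal_def, show ((volume Ω).toReal : ℝ) = μR from hμRdef.symm] at h
      exact h
    calc |(∫ x in Ω, |j u x| ^ (p (x,x) - 1) * Real.sign (j u x) * j w x) -
          lam * ∫ x in Ω, |j u x| ^ (r x - 1) * Real.sign (j u x) * j w x|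
        ≤ |∫ x in Ω, |j u x| ^ (p (x,x) - 1) * Real.sign (j u x) * j w x| +
          |lam| * |∫ x in Ω, |j u x| ^ (r x - 1) * Real.sign (j u x) * j w x| := by
          refine le_trans (aux_abs_sub _ _) ?_
          rw [abs_mul]
      _ ≤ (Iq + ∫ x in Ω, |j w x| ^ q x) +
          |lam| * ((μR + Iq) + (μR + ∫ x in Ω, |j w x| ^ q x)) :=
          add_le_add hA (mul_le_mul_of_nonneg_left hB (abs_nonneg _))
      _ ≤ R := by
          have h1 : (0:ℝ) ≤ |lam| := abs_nonneg lam
          have h2 : (μR + Iq) + (μR + ∫ x in Ω, |j w x| ^ q x) ≤ 2 * μR + (Du + Dw) := by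
            linarith [hIqu, hQwb]
          have h3 := mul_le_mul_of_nonneg_left h2 h1
          rw [hRdef]
          linarith [hIqu, hQwb]
  have hSnorm : ‖S u‖ ≤ R := by
    refine ContinuousLinearMap.opNorm_le_bound _ hR0 fun w => ?_
    rcases eq_or_ne w 0 with rfl | hw0
    · simp
    · have hnw : 0 < ‖w‖ := norm_pos_iff.2 hw0
      have hw1 : ‖(‖w‖⁻¹ • w : X)‖ ≤ 1 := by
        rw [norm_smul, norm_inv, norm_norm, inv_mul_cancel₀ hnw.ne']
      have h2 := hSb (‖w‖⁻¹ • w) hw1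
      rw [_root_.map_smul, smul_eq_mul, abs_mul, abs_inv, abs_norm] at h2
      rw [Real.norm_eq_abs]
      calc |S u w| = ‖w‖ * (‖w‖⁻¹ * |S u w|) := by field_simp
        _ ≤ ‖w‖ * R := mul_le_mul_of_nonneg_left h2 (norm_nonneg w)
        _ = R * ‖w‖ := mul_comm _ _
  rw [hvS, norm_neg, norm_smul, Real.norm_eq_abs, abs_of_nonneg ht0]
  calc t * ‖S u‖ ≤ 1 * R := mul_le_mul ht1 hSnorm (norm_nonneg _) zero_le_one
    _ = R := one_mul R
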